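/- For integers n ≥ 2 and k with 1 ≤ k < n/2, there exists an (n,k)-separating system S on [n] with |S| ≤ ⌈n/k⌉ · ⌈log_{⌈n/k⌉} n⌉. -/

import Mathlib

open Finset

/-- `S` is an `(n,k)`-separating system on `Fin n`: every member has size at most `k`
and every pair of distinct elements is separated by some member. -/
def IsSeparatingSystem (n k : ℕ) (S : Finset (Finset (Fin n))) : Prop :=
  (∀ s ∈ S, s.card ≤ k) ∧
  ∀ i j : Fin n, i ≠ j → ∃ s ∈ S, (i ∈ s ∧ j ∉ s) ∨ (i ∉ s ∧ j ∈ s)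

/-- The labeling function: the `a`-th letter of `i` is `(i + i / q^(a+1)) % q`.
This is a "digit-shifted" base-`q` representation which is balanced: on each aligned
block of `q` consecutive integers, each letter appears exactly once in each position. -/
private def sepLabel (q a i : ℕ) : ℕ := (i + i / q ^ (a + 1)) % q

/-- The labeling is jointly injective on `[0, q^m)`. -/
private lemma sepLabel_inj {q m i j : ℕ} (hq : 2 ≤ q) (hm : 1 ≤ m)
    (hi : i < q ^ m) (hj : j < q ^ m)
    (h : ∀ a < m, sepLabel q a i = sepLabel q a j) : i = j := by
  have htopi : i / q ^ m = 0 := Nat.div_eq_of_lt hi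
  have htopj : j / q ^ m = 0 := Nat.div_eq_of_lt hj
  have h0 : i % q = j % q := by
    have hh := h (m - 1) (by omega)
    unfold sepLabel at hh
    rw [show m - 1 + 1 = m by omega, htopi, htopj] at hh
    simpa using hh
  -- all "digits" agree modulo q
  have hdig : ∀ s, s ≤ m → i / q ^ s % q = j / q ^ s % q := by
    intro s hs
    match s with
    | 0 => simpa using h0
    | t + 1 =>
      have ht := h t (by omega)
      unfold sepLabel at ht
      exact Nat.ModEq.add_left_cancel h0 ht
  -- downward induction to show full quotients agree
  have key : ∀ t, t ≤ m → i / q ^ (m - t) = j / q ^ (m - t) := by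
    intro t
    induction t with
    | zero => intro _; simp [htopi, htopj]
    | succ t ih =>
      intro htm
      have h1 : i / q ^ (m - t) = j / q ^ (m - t) := ih (by omega)
      have h2 := hdig (m - (t + 1)) (by omega)
      have e : m - t = (m - (t + 1)) + 1 := by omega
      rw [e] at h1
      set s := m - (t + 1) with hs
      have di : i / q ^ s / q = i / q ^ (s + 1) := by
        rw [Nat.div_div_eq_div_mul, ← pow_succ]
      have dj : j / q ^ s / q = j / q ^ (s + 1) := by
        rw [Nat.div_div_eq_div_mul, ← pow_succ]
      have mi := Nat.div_add_mod (i / q ^ s) q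
      have mj := Nat.div_add_mod (j / q ^ s) q
      rw [di, h1] at mi
      rw [dj] at mj
      omega
  have := key m (le_refl m)
  simpa using this

theorem exists_separating_system (n k : ℕ) (hn : 2 ≤ n) (hk : 1 ≤ k) (hkn : 2 * k < n) :
    ∃ S : Finset (Finset (Fin n)), IsSeparatingSystem n k S ∧
      S.card ≤ ⌈(n : ℝ) / k⌉₊ * Nat.clog ⌈(n : ℝ) / k⌉₊ n := by
  set q : ℕ := ⌈(n : ℝ) / k⌉₊ with hqdef
  set m : ℕ := Nat.clog q n with hmdef
  have hk0 : (0 : ℝ) < k := by exact_mod_cast hk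
  have hq3 : 3 ≤ q := by
    have : (2 : ℝ) < (n : ℝ) / k := by
      rw [lt_div_iff₀ hk0]
      exact_mod_cast by omega
    have h2q : 2 < q := Nat.lt_ceil.2 this
    omega
  have hnqk : n ≤ q * k := by
    have h1 : (n : ℝ) / k ≤ q := Nat.le_ceil _
    have h2 : (n : ℝ) ≤ q * k := by
      rwa [div_le_iff₀ hk0] at h1
    exact_mod_cast h2
  have hq1 : 1 < q := by omega
  have hnm : n ≤ q ^ m := Nat.le_pow_clog hq1 n
  have hm1 : 1 ≤ m := Nat.clog_pos hq1 hn
  have hq0 : 0 < q := by omega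
  -- the separating system
  refine ⟨(range m ×ˢ range q).image
      (fun p => univ.filter fun i : Fin n => sepLabel q p.1 i.1 = p.2), ?_, ?_⟩
  · constructor
    · -- each set has size ≤ k
      intro s hs
      obtain ⟨p, hp, rfl⟩ := Finset.mem_image.1 hs
      have : (univ.filter fun i : Fin n => sepLabel q p.1 i.1 = p.2).card ≤ (range k).card := by
        apply Finset.card_le_card_of_injOn (fun i : Fin n => i.1 / q)
        · intro a _
          simp only [Finset.mem_coe, Finset.mem_range]
          rw [Nat.div_lt_iff_lt_mul hq0]
          calc a.1 < n := a.2
            _ ≤ q * k := hnqk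
            _ = k * q := mul_comm _ _
        · intro a ha b hb hab
          simp only [Finset.coe_filter, Set.mem_setOf_eq, Finset.mem_univ, true_and] at ha hb
          have hab' : a.1 / q = b.1 / q := hab
          have hc : a.1 / q ^ (p.1 + 1) = b.1 / q ^ (p.1 + 1) := by
            rw [pow_succ', ← Nat.div_div_eq_div_mul, ← Nat.div_div_eq_div_mul, hab']
          have hmod : a.1 % q = b.1 % q := by
            have : (a.1 + a.1 / q ^ (p.1 + 1)) % q = (b.1 + b.1 / q ^ (p.1 + 1)) % q := by
              unfold sepLabel at ha hb; rw [ha, hb]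
            rw [hc] at this
            exact Nat.ModEq.add_right_cancel' _ this
          have ma := Nat.div_add_mod a.1 q
          have mb := Nat.div_add_mod b.1 q
          rw [hab'] at ma
          exact Fin.ext (by omega)
      simpa using this
    · -- separation
      intro i j hij
      have hne : ¬ ∀ a < m, sepLabel q a i.1 = sepLabel q a j.1 := by
        intro h
        exact hij (Fin.ext (sepLabel_inj (by omega) hm1
          (lt_of_lt_of_le i.2 hnm) (lt_of_lt_of_le j.2 hnm) h))
      push_neg at hne
      obtain ⟨a, ha, hne⟩ := hne
      refine ⟨univ.filter fun x : Fin n => sepLabel q a x.1 = sepLabel q a i.1, ?_, ?_⟩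
      · apply Finset.mem_image.2
        refine ⟨(a, sepLabel q a i.1), ?_, rfl⟩
        simp only [Finset.mem_product, Finset.mem_range]
        exact ⟨ha, Nat.mod_lt _ hq0⟩
      · left
        constructor
        · simp
        · simp only [Finset.mem_filter, Finset.mem_univ, true_and]
          exact fun h => hne h.symm
  · -- cardinality bound
    calc ((range m ×ˢ range q).image _).card ≤ (range m ×ˢ range q).card :=
          Finset.card_image_le
      _ = m * q := by simp [Finset.card_product]
      _ = q * m := mul_comm _ _
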